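/- For any may-must argumentation F = (A, R, f_Q) in which every argument a has f_Q(a) = ((|pre(a)|, |pre(a)|), (1, 1)): the set of maximally proper labellings of F equals the set of exact labellings of F, which equals the set of complete labellings of the Dung framework (A, R). In particular the maxi.complete semantics of such F equals the complete semantics of (A, R). -/
import Mathlib


inductive Lab : Type
  | inn | out | undec
deriving DecidableEq

structure MMA (A : Type) [Fintype A] [DecidableEq A] where
  R : A → A → Prop
  decR : DecidableRel R
  n1 : A → ℕ
  n2 : A → ℕ
  m1 : A → ℕ
  m2 : A → ℕ
  hn : ∀ a, n1 a ≤ n2 a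
  hm : ∀ a, m1 a ≤ m2 a

variable {A : Type} [Fintype A] [DecidableEq A]

/-- Number of attackers of `a` labelled `out` by `lam`. -/
def outCnt (F : MMA A) (lam : A → Lab) (a : A) : ℕ :=
  letI := F.decR
  (Finset.univ.filter (fun b => F.R b a ∧ lam b = Lab.out)).card

/-- Number of attackers of `a` labelled `in` by `lam`. -/
def inCnt (F : MMA A) (lam : A → Lab) (a : A) : ℕ :=
  letI := F.decR
  (Finset.univ.filter (fun b => F.R b a ∧ lam b = Lab.inn)).card

/-- `lam` designates label `l` for argument `a` in `F`. -/
def designates (F : MMA A) (lam : A → Lab) (a : A) : Lab → Prop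
  | Lab.inn => F.n1 a ≤ outCnt F lam a ∧ inCnt F lam a < F.m2 a
  | Lab.out => F.m1 a ≤ inCnt F lam a ∧ outCnt F lam a < F.n2 a
  | Lab.undec =>
      (F.n2 a ≤ outCnt F lam a ∧ F.m2 a ≤ inCnt F lam a) ∨
      (F.n1 a ≤ outCnt F lam a ∧ outCnt F lam a < F.n2 a) ∨
      (F.m1 a ≤ inCnt F lam a ∧ inCnt F lam a < F.m2 a) ∨
      (outCnt F lam a < F.n1 a ∧ inCnt F lam a < F.m1 a)

/-- `a`'s label is proper under `lam`. -/
def proper (F : MMA A) (lam : A → Lab) (a : A) : Prop :=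
  designates F lam a (lam a)

/-- Exact labelling: every argument's label is proper. -/
def exactLab (F : MMA A) (lam : A → Lab) : Prop :=
  ∀ a, proper F lam a

/-- Pre-maximally proper labelling. -/
def preMaxProper (F : MMA A) (lam : A → Lab) : Prop :=
  ∀ a, proper F lam a ∨ lam a = Lab.undec

/-- Maximally proper labelling. -/
def maxProper (F : MMA A) (lam : A → Lab) : Prop :=
  preMaxProper F lam ∧
    ∀ lam', preMaxProper F lam' → ∀ a, proper F lam' a → proper F lam a

/-- The order `⪯` on labellings. -/
def labLE (l1 l2 : A → Lab) : Prop :=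
  ∀ a, (l1 a = Lab.inn → l2 a = Lab.inn) ∧ (l1 a = Lab.out → l2 a = Lab.out)

/-- Number of attackers of `a`. -/
def preCard (F : MMA A) (a : A) : ℕ :=
  letI := F.decR
  (Finset.univ.filter (fun b => F.R b a)).card

/-- Complete labelling of the underlying Dung framework. -/
def dungComplete (F : MMA A) (lam : A → Lab) : Prop :=
  ∀ a, (lam a = Lab.inn ↔ ∀ b, F.R b a → lam b = Lab.out) ∧
       (lam a = Lab.out ↔ ∃ b, F.R b a ∧ lam b = Lab.inn)

/-! ### Auxiliary counting lemmas -/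

lemma outCnt_le (F : MMA A) (lam : A → Lab) (a : A) :
    outCnt F lam a ≤ preCard F a := by
  letI := F.decR
  apply Finset.card_le_card
  intro b hb
  simp only [Finset.mem_filter] at *
  exact ⟨hb.1, hb.2.1⟩

lemma outCnt_eq_iff (F : MMA A) (lam : A → Lab) (a : A) :
    outCnt F lam a = preCard F a ↔ ∀ b, F.R b a → lam b = Lab.out := by
  letI := F.decR
  constructor
  · intro hc b hb
    have hsub : (Finset.univ.filter (fun b => F.R b a ∧ lam b = Lab.out)) ⊆
        (Finset.univ.filter (fun b => F.R b a)) := by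
      intro x hx; simp only [Finset.mem_filter] at *; exact ⟨hx.1, hx.2.1⟩
    have heq := Finset.eq_of_subset_of_card_le hsub (le_of_eq hc.symm)
    have hmem : b ∈ Finset.univ.filter (fun b => F.R b a) :=
      Finset.mem_filter.2 ⟨Finset.mem_univ b, hb⟩
    rw [← heq] at hmem
    simp only [Finset.mem_filter] at hmem
    exact hmem.2.2
  · intro hall
    unfold outCnt preCard
    congr 1
    apply Finset.filter_congr
    intro b _
    exact ⟨fun hx => hx.1, fun hx => ⟨hx, hall b hx⟩⟩

lemma inCnt_pos_iff (F : MMA A) (lam : A → Lab) (a : A) :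
    1 ≤ inCnt F lam a ↔ ∃ b, F.R b a ∧ lam b = Lab.inn := by
  letI := F.decR
  unfold inCnt
  rw [Nat.one_le_iff_ne_zero, ne_eq, Finset.card_eq_zero, ← ne_eq,
    ← Finset.nonempty_iff_ne_empty]
  constructor
  · rintro ⟨b, hb⟩; simp only [Finset.mem_filter] at hb; exact ⟨b, hb.2⟩
  · rintro ⟨b, hb⟩; exact ⟨b, by simp [hb.1, hb.2]⟩

lemma inCnt_zero_iff (F : MMA A) (lam : A → Lab) (a : A) :
    inCnt F lam a = 0 ↔ ¬ ∃ b, F.R b a ∧ lam b = Lab.inn := by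
  rw [← inCnt_pos_iff F lam a]
  omega

lemma allOut_inCnt_zero (F : MMA A) (lam : A → Lab) (a : A)
    (hall : ∀ b, F.R b a → lam b = Lab.out) : inCnt F lam a = 0 := by
  rw [inCnt_zero_iff]
  rintro ⟨b, hb, hinn⟩
  have := hall b hb
  rw [this] at hinn
  exact Lab.noConfusion hinn

lemma exIn_outCnt_lt (F : MMA A) (lam : A → Lab) (a : A)
    (hex : ∃ b, F.R b a ∧ lam b = Lab.inn) : outCnt F lam a < preCard F a := by
  letI := F.decR
  obtain ⟨b, hb, hinn⟩ := hex
  apply Finset.card_lt_card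
  rw [Finset.ssubset_iff_of_subset]
  · exact ⟨b, by simp [hb], by simp [hb, hinn]⟩
  · intro x hx; simp only [Finset.mem_filter] at *; exact ⟨hx.1, hx.2.1⟩

/-! ### `exactLab` iff `dungComplete` under the hypothesis `h` -/

lemma exact_iff_dung (F : MMA A)
    (h : ∀ a, F.n1 a = preCard F a ∧ F.n2 a = preCard F a ∧ F.m1 a = 1 ∧ F.m2 a = 1) :
    ∀ lam : A → Lab, exactLab F lam ↔ dungComplete F lam := by
  intro lam
  constructor
  · intro he a
    obtain ⟨h1, h2, h3, h4⟩ := h a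
    have hle := outCnt_le F lam a
    constructor
    · constructor
      · intro hinn
        have hp := he a
        unfold proper at hp
        rw [hinn] at hp
        obtain ⟨hpa, _⟩ := hp
        rw [h1] at hpa
        exact (outCnt_eq_iff F lam a).1 (le_antisymm hle hpa)
      · intro hall
        have hout : outCnt F lam a = preCard F a := (outCnt_eq_iff F lam a).2 hall
        have hzero : inCnt F lam a = 0 := allOut_inCnt_zero F lam a hall
        have hp := he a
        unfold proper at hp
        cases hlam : lam a with
        | inn => rfl
        | out =>
          rw [hlam] at hp
          obtain ⟨hpa, hpb⟩ := hp
          rw [h2] at hpb; omega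
        | undec =>
          rw [hlam] at hp
          simp only [designates, h1, h2, h3, h4] at hp
          omega
    · constructor
      · intro hout
        have hp := he a
        unfold proper at hp
        rw [hout] at hp
        obtain ⟨hpa, _⟩ := hp
        rw [h3] at hpa
        exact (inCnt_pos_iff F lam a).1 hpa
      · intro hex
        have hpos : 1 ≤ inCnt F lam a := (inCnt_pos_iff F lam a).2 hex
        have hlt : outCnt F lam a < preCard F a := exIn_outCnt_lt F lam a hex
        have hp := he a
        unfold proper at hp
        cases hlam : lam a with
        | out => rfl
        | inn =>
          rw [hlam] at hp
          obtain ⟨_, hpb⟩ := hp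
          rw [h4] at hpb; omega
        | undec =>
          rw [hlam] at hp
          simp only [designates, h1, h2, h3, h4] at hp
          omega
  · intro hd a
    obtain ⟨h1, h2, h3, h4⟩ := h a
    have hle := outCnt_le F lam a
    obtain ⟨hi, ho⟩ := hd a
    unfold proper
    cases hlam : lam a with
    | inn =>
      have hall := hi.1 hlam
      have hout : outCnt F lam a = preCard F a := (outCnt_eq_iff F lam a).2 hall
      have hzero : inCnt F lam a = 0 := allOut_inCnt_zero F lam a hall
      exact ⟨by omega, by omega⟩
    | out =>
      have hex := ho.1 hlam
      have hpos : 1 ≤ inCnt F lam a := (inCnt_pos_iff F lam a).2 hex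
      have hlt : outCnt F lam a < preCard F a := exIn_outCnt_lt F lam a hex
      exact ⟨by omega, by omega⟩
    | undec =>
      have hnall : ¬ ∀ b, F.R b a → lam b = Lab.out := fun hall => by
        rw [hi.2 hall] at hlam; exact Lab.noConfusion hlam
      have hnex : ¬ ∃ b, F.R b a ∧ lam b = Lab.inn := fun hex => by
        rw [ho.2 hex] at hlam; exact Lab.noConfusion hlam
      have hne : outCnt F lam a ≠ preCard F a := fun hc =>
        hnall ((outCnt_eq_iff F lam a).1 hc)
      have hzero : inCnt F lam a = 0 := (inCnt_zero_iff F lam a).2 hnex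
      refine Or.inr (Or.inr (Or.inr ⟨by omega, by omega⟩))

/-! ### Existence of a Dung complete labelling -/

/-- One step of the characteristic iteration. -/
def step (F : MMA A) (lam : A → Lab) (a : A) : Lab :=
  letI := F.decR
  if ∀ b, F.R b a → lam b = Lab.out then Lab.inn
  else if ∃ b, F.R b a ∧ lam b = Lab.inn then Lab.out
  else Lab.undec

lemma step_eq_inn_iff (F : MMA A) (lam : A → Lab) (a : A) :
    step F lam a = Lab.inn ↔ ∀ b, F.R b a → lam b = Lab.out := by
  letI := F.decR
  unfold step
  split
  · next hc => exact ⟨fun _ => hc, fun _ => rfl⟩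
  · next hc =>
    split
    · exact iff_of_false (by simp) hc
    · exact iff_of_false (by simp) hc

lemma step_eq_out_iff (F : MMA A) (lam : A → Lab) (a : A) :
    step F lam a = Lab.out ↔ ∃ b, F.R b a ∧ lam b = Lab.inn := by
  letI := F.decR
  unfold step
  split
  · next hc =>
    constructor
    · intro hx; exact Lab.noConfusion hx
    · rintro ⟨b, hb, hinn⟩
      have := hc b hb
      rw [this] at hinn
      exact Lab.noConfusion hinn
  · next hc =>
    split
    · next he => simp [he]
    · next he => simp [he]

lemma step_mono (F : MMA A) (l1 l2 : A → Lab) (hle : labLE l1 l2) :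
    labLE (step F l1) (step F l2) := by
  intro a
  constructor
  · intro hinn
    rw [step_eq_inn_iff] at hinn ⊢
    intro b hb
    exact (hle b).2 (hinn b hb)
  · intro hout
    rw [step_eq_out_iff] at hout ⊢
    obtain ⟨b, hb, hinn⟩ := hout
    exact ⟨b, hb, (hle b).1 hinn⟩

/-- The iteration, starting from all-undec. -/
def iterL (F : MMA A) : ℕ → A → Lab
  | 0 => fun _ => Lab.undec
  | k + 1 => step F (iterL F k)

lemma iterL_le (F : MMA A) (k : ℕ) : labLE (iterL F k) (iterL F (k + 1)) := by
  induction k with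
  | zero =>
    intro a
    constructor <;> (intro hx; exact Lab.noConfusion hx)
  | succ n ih =>
    exact step_mono F _ _ ih

/-- The set of non-undec arguments. -/
def ndSet (F : MMA A) (k : ℕ) : Finset A :=
  Finset.univ.filter (fun a => iterL F k a ≠ Lab.undec)

lemma ndSet_mono (F : MMA A) (k : ℕ) (hne : iterL F k ≠ iterL F (k + 1)) :
    (ndSet F k).card < (ndSet F (k + 1)).card := by
  have hle := iterL_le F k
  apply Finset.card_lt_card
  rw [Finset.ssubset_iff_of_subset]
  · have : ∃ a, iterL F k a ≠ iterL F (k + 1) a := by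
      by_contra hall
      push_neg at hall
      exact hne (funext hall)
    obtain ⟨a, ha⟩ := this
    have hu : iterL F k a = Lab.undec := by
      cases hx : iterL F k a with
      | inn => exact absurd (hx.trans ((hle a).1 hx).symm) ha
      | out => exact absurd (hx.trans ((hle a).2 hx).symm) ha
      | undec => rfl
    have hnu : iterL F (k + 1) a ≠ Lab.undec := fun hc => ha (hu.trans hc.symm)
    refine ⟨a, ?_, ?_⟩
    · exact Finset.mem_filter.2 ⟨Finset.mem_univ a, hnu⟩
    · simp [ndSet, hu]
  · intro a ha
    simp only [ndSet, Finset.mem_filter, Finset.mem_univ, true_and] at *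
    intro hc
    cases hx : iterL F k a with
    | inn => rw [(hle a).1 hx] at hc; exact Lab.noConfusion hc
    | out => rw [(hle a).2 hx] at hc; exact Lab.noConfusion hc
    | undec => exact ha hx

lemma exists_fixed (F : MMA A) : ∃ k, iterL F k = iterL F (k + 1) := by
  by_contra hall
  push_neg at hall
  have hgrow : ∀ k, k ≤ (ndSet F k).card := by
    intro k
    induction k with
    | zero => exact Nat.zero_le _
    | succ n ih =>
      have := ndSet_mono F n (hall n)
      omega
  have := hgrow (Fintype.card A + 1)
  have hle : (ndSet F (Fintype.card A + 1)).card ≤ Fintype.card A :=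
    Finset.card_le_univ _
  omega

lemma exists_dungComplete (F : MMA A) : ∃ lam, dungComplete F lam := by
  obtain ⟨k, hk⟩ := exists_fixed F
  refine ⟨iterL F k, fun a => ?_⟩
  constructor
  · rw [show iterL F k a = step F (iterL F k) a from congrFun hk a]
    exact step_eq_inn_iff F (iterL F k) a
  · rw [show iterL F k a = step F (iterL F k) a from congrFun hk a]
    exact step_eq_out_iff F (iterL F k) a

theorem stmt10 (F : MMA A)
    (h : ∀ a, F.n1 a = preCard F a ∧ F.n2 a = preCard F a ∧ F.m1 a = 1 ∧ F.m2 a = 1) :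
    ∀ lam : A → Lab,
      (maxProper F lam ↔ exactLab F lam) ∧
      (exactLab F lam ↔ dungComplete F lam) := by
  intro lam
  have hiff := exact_iff_dung F h
  refine ⟨⟨?_, ?_⟩, hiff lam⟩
  · intro ⟨hpre, hmax⟩
    obtain ⟨lam0, hlam0⟩ := exists_dungComplete F
    have hex0 : exactLab F lam0 := (hiff lam0).2 hlam0
    have hpre0 : preMaxProper F lam0 := fun a => Or.inl (hex0 a)
    intro a
    exact hmax lam0 hpre0 a (hex0 a)
  · intro he
    exact ⟨fun a => Or.inl (he a), fun _ _ a _ => he a⟩
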